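/- Let N ≥ 1 and fix R₀ > 0. Let (ε_n) be positive reals with ε_n → 0, let (y_n) ⊂ ℝ^N with ε_n·y_n → z for some z ∈ ℝ^N with |z| ≤ R₀, and let (u_n) ⊂ L²(ℝ^N) be such that the translates v_n := u_n(· + y_n) converge in L²(ℝ^N) to some v ≠ 0. Then Q_{ε_n}(u_n) → χ(z) = z in ℝ^N. -/

import Mathlib

open MeasureTheory Filter

/-- The truncation map `χ(x) = x` if `|x| ≤ R₀`, `χ(x) = R₀·x/|x|` if `|x| > R₀`. -/
noncomputable def chi {N : ℕ} (R₀ : ℝ) (x : EuclideanSpace ℝ (Fin N)) :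
    EuclideanSpace ℝ (Fin N) :=
  if ‖x‖ ≤ R₀ then x else (R₀ / ‖x‖) • x

/-- The barycenter-type map
`Q_ε(u) = (∫ χ(εx)·g(εx)·u(x)² dx) / (∫ g(εx)·u(x)² dx)`. -/
noncomputable def Qeps {N : ℕ} (R₀ : ℝ) (g : EuclideanSpace ℝ (Fin N) → ℝ) (ε : ℝ)
    (u : EuclideanSpace ℝ (Fin N) → ℝ) : EuclideanSpace ℝ (Fin N) :=
  (∫ x, g (ε • x) * (u x) ^ 2)⁻¹ • ∫ x, (g (ε • x) * (u x) ^ 2) • chi R₀ (ε • x)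

lemma chi_eq_smul {N : ℕ} {R₀ : ℝ} (hR₀ : 0 < R₀) (x : EuclideanSpace ℝ (Fin N)) :
    chi R₀ x = (R₀ / max R₀ ‖x‖) • x := by
  unfold chi
  split_ifs with h
  · rw [max_eq_left h, div_self hR₀.ne', one_smul]
  · rw [max_eq_right (le_of_not_ge h)]

lemma continuous_chi {N : ℕ} {R₀ : ℝ} (hR₀ : 0 < R₀) :
    Continuous (chi (N := N) R₀) := by
  have h : chi (N := N) R₀ = fun x => (R₀ / max R₀ ‖x‖) • x := funext (chi_eq_smul hR₀)
  rw [h]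
  exact (continuous_const.div (continuous_const.max continuous_norm)
    (fun x => (lt_of_lt_of_le hR₀ (le_max_left _ _)).ne')).smul continuous_id

lemma norm_chi_le {N : ℕ} {R₀ : ℝ} (hR₀ : 0 < R₀) (x : EuclideanSpace ℝ (Fin N)) :
    ‖chi R₀ x‖ ≤ R₀ := by
  have hmax : (0:ℝ) < max R₀ ‖x‖ := lt_of_lt_of_le hR₀ (le_max_left _ _)
  rw [chi_eq_smul hR₀, norm_smul, Real.norm_eq_abs,
    abs_of_nonneg (div_nonneg hR₀.le hmax.le)]
  calc R₀ / max R₀ ‖x‖ * ‖x‖ ≤ R₀ / max R₀ ‖x‖ * max R₀ ‖x‖ :=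
        mul_le_mul_of_nonneg_left (le_max_right _ _) (div_nonneg hR₀.le hmax.le)
    _ = R₀ := div_mul_cancel₀ _ hmax.ne'

lemma cs_int {α : Type*} [MeasurableSpace α] {μ : Measure α}
    {f h : α → ℝ} (hf : MemLp f 2 μ) (hh : MemLp h 2 μ) :
    ∫ a, |f a * h a| ∂μ ≤ (∫ a, f a ^ 2 ∂μ) ^ (1/2 : ℝ) * (∫ a, h a ^ 2 ∂μ) ^ (1/2 : ℝ) := by
  have hpq : Real.HolderConjugate 2 2 := Real.HolderConjugate.two_two
  have h2 : (ENNReal.ofReal (2:ℝ)) = 2 := by norm_num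
  have key := integral_mul_norm_le_Lp_mul_Lq (μ := μ) hpq (h2 ▸ hf) (h2 ▸ hh)
  have hr : ∀ t : ℝ, |t| ^ (2:ℝ) = t ^ 2 := fun t => by
    rw [show (2:ℝ) = ((2:ℕ):ℝ) by norm_num, Real.rpow_natCast, sq_abs]
  simp only [Real.norm_eq_abs] at key
  calc ∫ a, |f a * h a| ∂μ = ∫ a, |f a| * |h a| ∂μ := by simp [abs_mul]
    _ ≤ _ := by
        refine key.trans_eq ?_
        congr 1
        · congr 1; exact integral_congr_ae (Filter.Eventually.of_forall fun a => hr (f a))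
        · congr 1; exact integral_congr_ae (Filter.Eventually.of_forall fun a => hr (h a))

lemma key_tendsto {α : Type*} [MeasurableSpace α] {μ : Measure α}
    {E : Type*} [NormedAddCommGroup E] [NormedSpace ℝ E] [CompleteSpace E]
    {v : α → ℝ} (hv : MemLp v 2 μ)
    {w : ℕ → α → ℝ} (hw : ∀ n, MemLp (w n) 2 μ)
    (hw0 : Tendsto (fun n => ∫ x, (w n x) ^ 2 ∂μ) atTop (nhds 0))
    {h : ℕ → α → E} {C : ℝ} (hC0 : 0 ≤ C)
    (hmeas : ∀ n, AEStronglyMeasurable (h n) μ)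
    (hC : ∀ n x, ‖h n x‖ ≤ C)
    {L : E} (hlim : ∀ x, Tendsto (fun n => h n x) atTop (nhds L)) :
    Tendsto (fun n => ∫ x, (v x + w n x) ^ 2 • h n x ∂μ) atTop
      (nhds ((∫ x, (v x)^2 ∂μ) • L)) := by
  have hv2 : Integrable (fun x => v x ^ 2) μ := hv.integrable_sq
  have hw2 : ∀ n, Integrable (fun x => w n x ^ 2) μ := fun n => (hw n).integrable_sq
  have hvw : ∀ n, Integrable (fun x => v x * w n x) μ := by
    intro n
    have h1 : (1:ENNReal)/1 = 1/2 + 1/2 := by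
      rw [ENNReal.div_add_div_same, one_add_one_eq_two,
        ENNReal.div_self two_ne_zero ENNReal.ofNat_ne_top, div_one]
    exact memLp_one_iff_integrable.mp ((hw n).smul hv (r := 1))
  have hmeasI1 : ∀ n, AEStronglyMeasurable (fun x => v x ^ 2 • h n x) μ :=
    fun n => hv2.aestronglyMeasurable.smul (hmeas n)
  have hbnd1 : ∀ n x, ‖v x ^ 2 • h n x‖ ≤ C * v x ^ 2 := by
    intro n x
    rw [norm_smul, Real.norm_eq_abs, abs_of_nonneg (sq_nonneg _), mul_comm]
    exact mul_le_mul_of_nonneg_right (hC n x) (sq_nonneg _)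
  have hI1 : ∀ n, Integrable (fun x => v x ^ 2 • h n x) μ := fun n =>
    (hv2.const_mul C).mono' (hmeasI1 n) (Eventually.of_forall (hbnd1 n))
  set q : ℕ → α → ℝ := fun n x => w n x ^ 2 + 2 * (v x * w n x) with hq
  have hqint : ∀ n, Integrable (q n) μ := fun n => (hw2 n).add ((hvw n).const_mul 2)
  have hqabs : ∀ n x, |q n x| ≤ w n x ^ 2 + 2 * |v x * w n x| := by
    intro n x
    refine (abs_add_le _ _).trans ?_
    rw [abs_of_nonneg (sq_nonneg _), abs_mul, abs_two]
  have hdom : ∀ n, Integrable (fun x => C * (w n x ^ 2 + 2 * |v x * w n x|)) μ :=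
    fun n => ((hw2 n).add ((hvw n).abs.const_mul 2)).const_mul C
  have hbnd2 : ∀ n x, ‖q n x • h n x‖ ≤ C * (w n x ^ 2 + 2 * |v x * w n x|) := by
    intro n x
    rw [norm_smul, Real.norm_eq_abs]
    calc |q n x| * ‖h n x‖ ≤ (w n x ^ 2 + 2 * |v x * w n x|) * C :=
      mul_le_mul (hqabs n x) (hC n x) (norm_nonneg _) (by positivity)
    _ = _ := mul_comm _ _
  have hI2 : ∀ n, Integrable (fun x => q n x • h n x) μ := fun n =>
    (hdom n).mono' ((hqint n).aestronglyMeasurable.smul (hmeas n))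
      (Eventually.of_forall (hbnd2 n))
  have hsplit : ∀ n, ∫ x, (v x + w n x) ^ 2 • h n x ∂μ
      = (∫ x, v x ^ 2 • h n x ∂μ) + ∫ x, q n x • h n x ∂μ := by
    intro n
    rw [← integral_add (hI1 n) (hI2 n)]
    refine integral_congr_ae (Eventually.of_forall fun x => ?_)
    show (v x + w n x) ^ 2 • h n x = v x ^ 2 • h n x + q n x • h n x
    rw [← add_smul]
    congr 1
    simp only [hq]; ring
  have hA : Tendsto (fun n => ∫ x, v x ^ 2 • h n x ∂μ) atTop
      (nhds ((∫ x, v x ^ 2 ∂μ) • L)) := by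
    rw [← integral_smul_const]
    exact tendsto_integral_of_dominated_convergence (fun x => C * v x ^ 2) hmeasI1
      (hv2.const_mul C)
      (fun n => Eventually.of_forall (hbnd1 n))
      (Eventually.of_forall fun x => (hlim x).const_smul (v x ^ 2))
  have hB : Tendsto (fun n => ∫ x, q n x • h n x ∂μ) atTop (nhds 0) := by
    apply squeeze_zero_norm (a := fun n => C * (∫ x, w n x ^ 2 ∂μ)
        + 2 * C * ((∫ x, v x ^ 2 ∂μ) ^ (1/2:ℝ) * (∫ x, w n x ^ 2 ∂μ) ^ (1/2:ℝ)))
    · intro n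
      calc ‖∫ x, q n x • h n x ∂μ‖ ≤ ∫ x, ‖q n x • h n x‖ ∂μ :=
            norm_integral_le_integral_norm _
      _ ≤ ∫ x, C * (w n x ^ 2 + 2 * |v x * w n x|) ∂μ :=
            integral_mono (hI2 n).norm (hdom n) (hbnd2 n)
      _ = C * (∫ x, w n x ^ 2 ∂μ) + 2 * C * ∫ x, |v x * w n x| ∂μ := by
            rw [integral_const_mul, integral_add (hw2 n) ((hvw n).abs.const_mul 2),
              integral_const_mul]; ring
      _ ≤ _ := add_le_add_right
            (mul_le_mul_of_nonneg_left (cs_int hv (hw n)) (by positivity)) _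
    · have h12 : Tendsto (fun n => (∫ x, w n x ^ 2 ∂μ) ^ (1/2:ℝ)) atTop (nhds 0) := by
        have := hw0.rpow_const (p := 1/2) (Or.inr (by norm_num))
        simpa [Real.zero_rpow (by norm_num : (1/2:ℝ) ≠ 0)] using this
      have := (hw0.const_mul C).add
        (((h12.const_mul ((∫ x, v x ^ 2 ∂μ) ^ (1/2:ℝ))).const_mul (2 * C)))
      simpa using this
  have hsum := hA.add hB
  rw [add_zero] at hsum
  exact hsum.congr (fun n => (hsplit n).symm)

/-- Fix `R₀ > 0` and `g` continuous, positive, vanishing at infinity. Let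
`ε_n → 0` with `ε_n > 0`, let `(y_n) ⊂ ℝ^N` with `ε_n·y_n → z` where `|z| ≤ R₀`, and let
`(u_n) ⊂ L²(ℝ^N)` be such that the translates `v_n := u_n(· + y_n)` converge in `L²(ℝ^N)`
to some `v ≠ 0`. Then `Q_{ε_n}(u_n) → χ(z) = z`. -/
theorem Qeps_tendsto_of_translates (N : ℕ) (hN : 1 ≤ N) (R₀ : ℝ) (hR₀ : 0 < R₀)
    (g : EuclideanSpace ℝ (Fin N) → ℝ) (hg : Continuous g) (hgpos : ∀ x, 0 < g x)
    (hg0 : Tendsto g (cocompact _) (nhds 0))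
    (ε : ℕ → ℝ) (hεpos : ∀ n, 0 < ε n) (hε0 : Tendsto ε atTop (nhds 0))
    (y : ℕ → EuclideanSpace ℝ (Fin N)) (z : EuclideanSpace ℝ (Fin N))
    (hz : ‖z‖ ≤ R₀) (hyz : Tendsto (fun n => ε n • y n) atTop (nhds z))
    (u : ℕ → EuclideanSpace ℝ (Fin N) → ℝ) (hun : ∀ n, MemLp (u n) 2 volume)
    (v : EuclideanSpace ℝ (Fin N) → ℝ) (hv : MemLp v 2 volume)
    (hvne : ¬ v =ᵐ[volume] 0)
    (hconv : Tendsto (fun n => ∫ x, (u n (x + y n) - v x) ^ 2) atTop (nhds 0)) :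
    Tendsto (fun n => Qeps R₀ g (ε n) (u n)) atTop (nhds z) := by
  classical
  obtain ⟨K, hK, hKg⟩ : ∃ K : Set (EuclideanSpace ℝ (Fin N)), IsCompact K ∧
      ∀ x ∉ K, |g x| ≤ 1 := by
    have hev : ∀ᶠ x in cocompact (EuclideanSpace ℝ (Fin N)), g x ∈ Metric.closedBall 0 1 :=
      hg0 (Metric.closedBall_mem_nhds 0 one_pos)
    obtain ⟨K, hK1, hK2⟩ := hasBasis_cocompact.eventually_iff.mp hev
    refine ⟨K, hK1, fun x hx => ?_⟩
    have := hK2 (Set.mem_compl hx)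
    simpa [Real.dist_eq] using this
  obtain ⟨C₀, hC₀⟩ := hK.exists_bound_of_continuousOn hg.continuousOn
  set M : ℝ := max C₀ 1 with hM
  have hM0 : 0 ≤ M := le_trans zero_le_one (le_max_right _ _)
  have hgM : ∀ x, |g x| ≤ M := by
    intro x
    by_cases hx : x ∈ K
    · exact le_trans (by simpa [Real.norm_eq_abs] using hC₀ x hx) (le_max_left _ _)
    · exact le_trans (hKg x hx) (le_max_right _ _)
  set w : ℕ → EuclideanSpace ℝ (Fin N) → ℝ := fun n x => u n (x + y n) - v x with hwdef
  have hwmem : ∀ n, MemLp (w n) 2 volume := by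
    intro n
    have h1 : MemLp (fun x => u n (x + y n)) 2 volume :=
      (hun n).comp_measurePreserving (measurePreserving_add_right volume (y n))
    exact h1.sub hv
  have hconv' : Tendsto (fun n => ∫ x, (w n x) ^ 2) atTop (nhds 0) := hconv
  set θ : ℕ → EuclideanSpace ℝ (Fin N) → EuclideanSpace ℝ (Fin N) :=
    fun n x => ε n • x + ε n • y n with hθ
  have hθcont : ∀ n, Continuous (θ n) := fun n =>
    (continuous_const_smul _).add continuous_const
  have hθlim : ∀ x, Tendsto (fun n => θ n x) atTop (nhds z) := by
    intro x
    have h1 : Tendsto (fun n => ε n • x) atTop (nhds ((0:ℝ) • x)) := hε0.smul_const x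
    rw [zero_smul] at h1
    have h2 := h1.add hyz
    rwa [zero_add] at h2
  have hI0 : 0 < ∫ x, v x ^ 2 := by
    rcases lt_or_eq_of_le (integral_nonneg (f := fun x => v x ^ 2) (fun x => sq_nonneg (v x))) with h | h
    · exact h
    · exfalso
      apply hvne
      have h0 := (integral_eq_zero_iff_of_nonneg (fun x => sq_nonneg (v x))
        hv.integrable_sq).mp h.symm
      filter_upwards [h0] with x hx
      exact pow_eq_zero_iff (n := 2) (by norm_num) |>.mp hx
  have hden : Tendsto (fun n => ∫ x, (v x + w n x) ^ 2 • g (θ n x)) atTop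
      (nhds ((∫ x, v x ^ 2) • g z)) :=
    key_tendsto hv hwmem hconv' hM0
      (fun n => (hg.comp (hθcont n)).aestronglyMeasurable)
      (fun n x => by simpa [Real.norm_eq_abs] using hgM (θ n x))
      (fun x => (hg.tendsto z).comp (hθlim x))
  have hz' : chi R₀ z = z := if_pos hz
  have hnum : Tendsto (fun n => ∫ x, (v x + w n x) ^ 2 • (g (θ n x) • chi R₀ (θ n x))) atTop
      (nhds ((∫ x, v x ^ 2) • (g z • z))) := by
    have hlim2 : ∀ x, Tendsto (fun n => g (θ n x) • chi R₀ (θ n x)) atTop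
        (nhds (g z • z)) := by
      intro x
      have h1 := (hg.tendsto z).comp (hθlim x)
      have h2 := ((continuous_chi hR₀).tendsto z).comp (hθlim x)
      have h3 := h1.smul h2
      rw [hz'] at h3
      exact h3
    exact key_tendsto hv hwmem hconv' (mul_nonneg hM0 hR₀.le)
      (fun n => ((hg.comp (hθcont n)).smul
        ((continuous_chi hR₀).comp (hθcont n))).aestronglyMeasurable)
      (fun n x => by
        show ‖g (θ n x) • chi R₀ (θ n x)‖ ≤ M * R₀
        rw [norm_smul, Real.norm_eq_abs]
        exact mul_le_mul (hgM _) (norm_chi_le hR₀ _) (norm_nonneg _) hM0)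
      hlim2
  have hQ : ∀ n, Qeps R₀ g (ε n) (u n)
      = (∫ x, (v x + w n x) ^ 2 • g (θ n x))⁻¹
        • ∫ x, (v x + w n x) ^ 2 • (g (θ n x) • chi R₀ (θ n x)) := by
    intro n
    unfold Qeps
    congr 1
    · congr 1
      rw [← integral_add_right_eq_self (fun x => g (ε n • x) * (u n x) ^ 2) (y n)]
      refine integral_congr_ae (Eventually.of_forall fun x => ?_)
      have hx : ε n • (x + y n) = θ n x := by rw [hθ, smul_add]
      have hu : u n (x + y n) = v x + w n x := by simp [hwdef]
      show g (ε n • (x + y n)) * (u n (x + y n)) ^ 2 = (v x + w n x) ^ 2 • g (θ n x)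
      rw [hx, hu, smul_eq_mul, mul_comm]
    · rw [← integral_add_right_eq_self
        (fun x => (g (ε n • x) * (u n x) ^ 2) • chi R₀ (ε n • x)) (y n)]
      refine integral_congr_ae (Eventually.of_forall fun x => ?_)
      have hx : ε n • (x + y n) = θ n x := by rw [hθ, smul_add]
      have hu : u n (x + y n) = v x + w n x := by simp [hwdef]
      show (g (ε n • (x + y n)) * (u n (x + y n)) ^ 2) • chi R₀ (ε n • (x + y n))
        = (v x + w n x) ^ 2 • (g (θ n x) • chi R₀ (θ n x))
      rw [hx, hu, mul_comm, mul_smul]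
  set c : ℝ := (∫ x, v x ^ 2) • g z with hc
  have hcpos : 0 < c := by
    rw [hc, smul_eq_mul]
    exact mul_pos hI0 (hgpos z)
  have hfinal := (hden.inv₀ hcpos.ne').smul hnum
  have hval : c⁻¹ • ((∫ x, v x ^ 2) • ((g z) • z)) = z := by
    have h4 : (∫ x, v x ^ 2) • ((g z) • z) = c • z := by
      rw [smul_smul, hc, smul_eq_mul]
    rw [h4, smul_smul, inv_mul_cancel₀ hcpos.ne', one_smul]
  rw [hval] at hfinal
  exact hfinal.congr (fun n => (hQ n).symm)
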